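/- Let (X₁,Y₁) and (X₂,Y₂) be random vectors taking values in the unit square [0,1]×[0,1], with cdfs F₁ and F₂. If F₁(s,t) ≤ F₂(s,t) for all (s,t) ∈ [0,1]×[0,1], then for every function φ : ℝ² → ℝ which is C² on an open connected set Ω containing [0,1]×[0,1], increasing (nondecreasing) in each of its arguments, and submodular (∂²φ/∂x∂y ≤ 0 on Ω), one has E[φ(X₁,Y₁)] ≥ E[φ(X₂,Y₂)]. -/

import Mathlib

open Set MeasureTheory Filter

/-- A function monotone on ℝ with a derivative at a point has nonnegative derivative there. -/
lemma mono_hasDerivAt_nonneg {f : ℝ → ℝ} {c x : ℝ} (hm : Monotone f)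
    (h : HasDerivAt f c x) : 0 ≤ c := by
  have h' := hasDerivAt_iff_tendsto_slope.1 h
  refine ge_of_tendsto h' ?_
  filter_upwards [self_mem_nhdsWithin] with y hy
  rcases lt_or_gt_of_ne (hy : y ≠ x) with h1 | h1
  · have hnum : f y - f x ≤ 0 := sub_nonpos.2 (hm h1.le)
    have hden : y - x < 0 := sub_neg.2 h1
    rw [slope_def_field]
    exact div_nonneg_iff.2 (Or.inr ⟨hnum, hden.le⟩)
  · have hnum : 0 ≤ f y - f x := sub_nonneg.2 (hm h1.le)
    have hden : 0 < y - x := sub_pos.2 h1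
    rw [slope_def_field]
    exact div_nonneg hnum hden.le

/-- Conversion of an interval integral into an indicator integral over `[0,1]`. -/
lemma interval_to_indicator {g : ℝ → ℝ} {x : ℝ} (hx : x ∈ Icc (0:ℝ) 1) :
    (∫ s in x..1, g s) = ∫ s in Icc (0:ℝ) 1, (if x ≤ s then g s else 0) := by
  have h1 : (fun s => if x ≤ s then g s else 0) = Set.indicator (Ici x) g := by
    ext s; simp [Set.indicator_apply, mem_Ici]
  rw [h1, MeasureTheory.integral_indicator measurableSet_Ici,
    Measure.restrict_restrict measurableSet_Ici]
  have h2 : Ici x ∩ Icc (0:ℝ) 1 = Icc x 1 := by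
    ext s
    simp only [mem_inter_iff, mem_Ici, mem_Icc]
    constructor
    · rintro ⟨h, _, h'⟩; exact ⟨h, h'⟩
    · rintro ⟨h, h'⟩; exact ⟨h, le_trans hx.1 h, h'⟩
  rw [h2, intervalIntegral.integral_of_le hx.2, integral_Icc_eq_integral_Ioc]

lemma ae_prod_snd_mem {α β : Type*} [MeasurableSpace α] [MeasurableSpace β]
    (μ : Measure α) (ν : Measure β) [SFinite ν] {s : Set β} (h : ∀ᵐ b ∂ν, b ∈ s) :
    ∀ᵐ p ∂(μ.prod ν), p.2 ∈ s := by
  rw [ae_iff] at h ⊢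
  have he : {p : α × β | ¬ p.2 ∈ s} = (univ : Set α) ×ˢ {b | ¬ b ∈ s} := by
    ext p; simp [Set.mem_prod]
  rw [he, Measure.prod_prod, h, mul_zero]

lemma ae_prod_fst_mem {α β : Type*} [MeasurableSpace α] [MeasurableSpace β]
    (μ : Measure α) (ν : Measure β) [SFinite ν] {s : Set α} (h : ∀ᵐ a ∂μ, a ∈ s) :
    ∀ᵐ p ∂(μ.prod ν), p.1 ∈ s := by
  rw [ae_iff] at h ⊢
  have he : {p : α × β | ¬ p.1 ∈ s} = {a | ¬ a ∈ s} ×ˢ (univ : Set β) := by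
    ext p; simp [Set.mem_prod]
  rw [he, Measure.prod_prod, h, zero_mul]

lemma bounded_integrable {δ : Type*} [MeasurableSpace δ] {μ : Measure δ} [IsFiniteMeasure μ]
    {f : δ → ℝ} (hm : AEStronglyMeasurable f μ) {M : ℝ} (hb : ∀ᵐ a ∂μ, |f a| ≤ M) :
    Integrable f μ :=
  ⟨hm, HasFiniteIntegral.of_bounded (C := M) (by simpa [Real.norm_eq_abs] using hb)⟩

/-- **First order bivariate stochastic dominance over the submodular class `Φ⁻`.**
`(X₁,Y₁)` and `(X₂,Y₂)` are random vectors with values in the unit square and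
cdfs `F₁`, `F₂`.  If `F₁(s,t) ≤ F₂(s,t)` on the unit square, then
`E[φ(X₁,Y₁)] ≥ E[φ(X₂,Y₂)]` for every `φ : ℝ² → ℝ` that is `C²` on an open
connected set `Ω ⊇ [0,1]²`, increasing in each argument, and submodular
(`∂²φ/∂x∂y ≤ 0` on `Ω`). -/
theorem first_order_bivariate_SD_submodular
    {α : Type*} [MeasurableSpace α] (ℙ : Measure α) [IsProbabilityMeasure ℙ]
    (V W : α → ℝ × ℝ) (hV : Measurable V) (hW : Measurable W)
    (hVr : ∀ ω, V ω ∈ Icc (0:ℝ) 1 ×ˢ Icc (0:ℝ) 1)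
    (hWr : ∀ ω, W ω ∈ Icc (0:ℝ) 1 ×ˢ Icc (0:ℝ) 1)
    (F₁ F₂ : ℝ → ℝ → ℝ)
    (hF₁ : ∀ s t : ℝ, F₁ s t = (ℙ {ω | (V ω).1 ≤ s ∧ (V ω).2 ≤ t}).toReal)
    (hF₂ : ∀ s t : ℝ, F₂ s t = (ℙ {ω | (W ω).1 ≤ s ∧ (W ω).2 ≤ t}).toReal)
    (hdom : ∀ s ∈ Icc (0:ℝ) 1, ∀ t ∈ Icc (0:ℝ) 1, F₁ s t ≤ F₂ s t) :
    ∀ φ : ℝ → ℝ → ℝ,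
      (∃ U : Set (ℝ × ℝ), IsOpen U ∧ IsConnected U ∧
          Icc (0:ℝ) 1 ×ˢ Icc (0:ℝ) 1 ⊆ U ∧
          ContDiffOn ℝ 2 (fun q : ℝ × ℝ => φ q.1 q.2) U ∧
          -- submodularity: ∂²φ/∂x∂y ≤ 0 on Ω
          (∀ q ∈ U, deriv (fun x => deriv (fun y => φ x y) q.2) q.1 ≤ 0)) →
      (∀ y : ℝ, Monotone fun x => φ x y) →
      (∀ x : ℝ, Monotone fun y => φ x y) →
      ∫ ω, φ (W ω).1 (W ω).2 ∂ℙ ≤ ∫ ω, φ (V ω).1 (V ω).2 ∂ℙ := by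
  rintro φ ⟨U, hUo, hUc, hKU, hC2, hsub⟩ hmx hmy
  set K : Set ℝ := Icc (0:ℝ) 1 with hKdef
  set Φ : ℝ × ℝ → ℝ := fun q => φ q.1 q.2 with hΦdef
  set D₁ : ℝ × ℝ → ℝ := fun p => fderiv ℝ Φ p (1, 0) with hD₁def
  set D₂ : ℝ × ℝ → ℝ := fun p => fderiv ℝ Φ p (0, 1) with hD₂def
  set D₁₂ : ℝ × ℝ → ℝ := fun p => fderiv ℝ D₂ p (1, 0) with hD₁₂def
  have hsq : ∀ a b : ℝ, a ∈ K → b ∈ K → ((a, b) : ℝ × ℝ) ∈ U := fun a b ha hb =>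
    hKU (Set.mk_mem_prod ha hb)
  -- differentiability of Φ on U
  have hΦd : ∀ p ∈ U, DifferentiableAt ℝ Φ p := fun p hp =>
    (hC2.contDiffAt (hUo.mem_nhds hp)).differentiableAt two_ne_zero
  -- partial derivatives as HasDerivAt
  have hD₂has : ∀ x y : ℝ, ((x, y) : ℝ × ℝ) ∈ U →
      HasDerivAt (fun y' => φ x y') (D₂ (x, y)) y := by
    intro x y hxy
    have hline : HasDerivAt (fun y' : ℝ => ((x, y') : ℝ × ℝ)) (0, 1) y :=
      (hasDerivAt_const y x).prodMk (hasDerivAt_id y)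
    exact (hΦd _ hxy).hasFDerivAt.comp_hasDerivAt y hline
  have hD₁has : ∀ x y : ℝ, ((x, y) : ℝ × ℝ) ∈ U →
      HasDerivAt (fun x' => φ x' y) (D₁ (x, y)) x := by
    intro x y hxy
    have hline : HasDerivAt (fun x' : ℝ => ((x', y) : ℝ × ℝ)) (1, 0) x :=
      (hasDerivAt_id x).prodMk (hasDerivAt_const x y)
    exact (hΦd _ hxy).hasFDerivAt.comp_hasDerivAt x hline
  -- C¹ smoothness of the derivative
  have hfder : ContDiffOn ℝ 1 (fun p => fderiv ℝ Φ p) U :=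
    hC2.fderiv_of_isOpen hUo (by norm_num)
  have hD₂C1 : ContDiffOn ℝ 1 D₂ U := hfder.clm_apply contDiffOn_const
  have hD₁C1 : ContDiffOn ℝ 1 D₁ U := hfder.clm_apply contDiffOn_const
  have hD₂d : ∀ p ∈ U, DifferentiableAt ℝ D₂ p := fun p hp =>
    (hD₂C1.contDiffAt (hUo.mem_nhds hp)).differentiableAt one_ne_zero
  have hD₁₂has : ∀ x y : ℝ, ((x, y) : ℝ × ℝ) ∈ U →
      HasDerivAt (fun x' => D₂ (x', y)) (D₁₂ (x, y)) x := by
    intro x y hxy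
    have hline : HasDerivAt (fun x' : ℝ => ((x', y) : ℝ × ℝ)) (1, 0) x :=
      (hasDerivAt_id x).prodMk (hasDerivAt_const x y)
    exact (hD₂d _ hxy).hasFDerivAt.comp_hasDerivAt x hline
  have hD₁₂cont : ContinuousOn D₁₂ U := by
    have h0 : ContDiffOn ℝ 0 (fun p => fderiv ℝ D₂ p) U :=
      hD₂C1.fderiv_of_isOpen hUo (by norm_num)
    exact (h0.clm_apply contDiffOn_const).continuousOn
  have hD₁cont : ContinuousOn D₁ U := hD₁C1.continuousOn
  have hD₂cont : ContinuousOn D₂ U := hD₂C1.continuousOn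
  -- signs
  have hD₁nn : ∀ p ∈ U, 0 ≤ D₁ p := by
    intro p hp
    exact mono_hasDerivAt_nonneg (hmx p.2) (hD₁has p.1 p.2 (by simpa using hp))
  have hD₂nn : ∀ p ∈ U, 0 ≤ D₂ p := by
    intro p hp
    exact mono_hasDerivAt_nonneg (hmy p.1) (hD₂has p.1 p.2 (by simpa using hp))
  have hsubD : ∀ p ∈ U, D₁₂ p ≤ 0 := by
    intro p hp
    have key := hsub p hp
    have hcont : Continuous fun x : ℝ => ((x, p.2) : ℝ × ℝ) :=
      continuous_id.prodMk continuous_const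
    have hnb : ∀ᶠ x in nhds p.1, ((x, p.2) : ℝ × ℝ) ∈ U := by
      have : ((p.1, p.2) : ℝ × ℝ) ∈ U := by simpa using hp
      exact (hUo.preimage hcont).mem_nhds this
    have hev : (fun x => deriv (fun y => φ x y) p.2) =ᶠ[nhds p.1]
        (fun x => D₂ (x, p.2)) := by
      filter_upwards [hnb] with x hx
      exact (hD₂has x p.2 hx).deriv
    rw [hev.deriv_eq] at key
    rwa [(hD₁₂has p.1 p.2 (by simpa using hp)).deriv] at key
  -- representation lemma
  have rep : ∀ x y : ℝ, x ∈ K → y ∈ K →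
      φ x y = φ 1 1 - (∫ s in x..1, D₁ (s, 1)) - (∫ t in y..1, D₂ (1, t))
        + ∫ t in y..1, ∫ s in x..1, D₁₂ (s, t) := by
    intro x y hx hy
    have hxI : uIcc x 1 = Icc x 1 := uIcc_of_le hx.2
    have hyI : uIcc y 1 = Icc y 1 := uIcc_of_le hy.2
    have hmemx : ∀ s ∈ uIcc x 1, s ∈ K := by
      intro s hs; rw [hxI] at hs; exact ⟨le_trans hx.1 hs.1, hs.2⟩
    have hmemy : ∀ t ∈ uIcc y 1, t ∈ K := by
      intro t ht; rw [hyI] at ht; exact ⟨le_trans hy.1 ht.1, ht.2⟩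
    -- FTC 1 : in the y variable at fixed x
    have int1 : IntervalIntegrable (fun t => D₂ (x, t)) volume y 1 := by
      apply ContinuousOn.intervalIntegrable
      apply hD₂cont.comp (Continuous.continuousOn (by fun_prop))
      intro t ht; exact hsq x t hx (hmemy t ht)
    have h1 : ∫ t in y..1, D₂ (x, t) = φ x 1 - φ x y :=
      intervalIntegral.integral_eq_sub_of_hasDerivAt
        (fun t ht => hD₂has x t (hsq x t hx (hmemy t ht))) int1
    -- FTC 2 : mixed derivative in the x variable at fixed t
    have h2 : ∀ t ∈ uIcc y 1, (∫ s in x..1, D₁₂ (s, t)) = D₂ (1, t) - D₂ (x, t) := by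
      intro t ht
      have int2 : IntervalIntegrable (fun s => D₁₂ (s, t)) volume x 1 := by
        apply ContinuousOn.intervalIntegrable
        apply hD₁₂cont.comp (Continuous.continuousOn (by fun_prop))
        intro s hs; exact hsq s t (hmemx s hs) (hmemy t ht)
      exact intervalIntegral.integral_eq_sub_of_hasDerivAt
        (fun s hs => hD₁₂has s t (hsq s t (hmemx s hs) (hmemy t ht))) int2
    -- FTC 3 : in the x variable at t = 1
    have h3 : ∫ s in x..1, D₁ (s, 1) = φ 1 1 - φ x 1 := by
      have int3 : IntervalIntegrable (fun s => D₁ (s, 1)) volume x 1 := by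
        apply ContinuousOn.intervalIntegrable
        apply hD₁cont.comp (Continuous.continuousOn (by fun_prop))
        intro s hs; exact hsq s 1 (hmemx s hs) (right_mem_Icc.2 zero_le_one)
      exact intervalIntegral.integral_eq_sub_of_hasDerivAt
        (fun s hs => hD₁has s 1 (hsq s 1 (hmemx s hs) (right_mem_Icc.2 zero_le_one))) int3
    -- combine
    have int4 : IntervalIntegrable (fun t => D₂ (1, t)) volume y 1 := by
      apply ContinuousOn.intervalIntegrable
      apply hD₂cont.comp (Continuous.continuousOn (by fun_prop))
      intro t ht; exact hsq 1 t (right_mem_Icc.2 zero_le_one) (hmemy t ht)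
    have h4 : (∫ t in y..1, ∫ s in x..1, D₁₂ (s, t))
        = (∫ t in y..1, D₂ (1, t)) - ∫ t in y..1, D₂ (x, t) := by
      rw [intervalIntegral.integral_congr (g := fun t => D₂ (1, t) - D₂ (x, t)) h2]
      exact intervalIntegral.integral_sub int4 int1
    rw [h3, h4, h1]
    ring
  -- basic facts about K
  have hKmeas : MeasurableSet K := by rw [hKdef]; exact measurableSet_Icc
  have h0K : (0:ℝ) ∈ K := by rw [hKdef]; exact left_mem_Icc.2 zero_le_one
  have h1K : (1:ℝ) ∈ K := by rw [hKdef]; exact right_mem_Icc.2 zero_le_one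
  haveI hμKfin : IsFiniteMeasure (volume.restrict K) := by
    constructor
    rw [Measure.restrict_apply_univ, hKdef]
    simp [Real.volume_Icc]
  have conv : ∀ (g : ℝ → ℝ) (x : ℝ), x ∈ K →
      (∫ s in x..1, g s) = ∫ s, (if x ≤ s then g s else 0) ∂(volume.restrict K) := by
    intro g x hx
    rw [hKdef] at hx ⊢
    exact interval_to_indicator hx
  -- measurability of the derivative functions
  have mD₁ : Measurable D₁ := by rw [hD₁def]; exact measurable_fderiv_apply_const ℝ Φ (1, 0)
  have mD₂ : Measurable D₂ := by rw [hD₂def]; exact measurable_fderiv_apply_const ℝ Φ (0, 1)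
  have mD₁₂ : Measurable D₁₂ := by rw [hD₁₂def]; exact measurable_fderiv_apply_const ℝ D₂ (1, 0)
  -- uniform bound on the compact square
  have hKKcompact : IsCompact (K ×ˢ K) := by rw [hKdef]; exact isCompact_Icc.prod isCompact_Icc
  obtain ⟨M₁, hM₁⟩ := hKKcompact.exists_bound_of_continuousOn (hD₁cont.mono hKU)
  obtain ⟨M₂, hM₂⟩ := hKKcompact.exists_bound_of_continuousOn (hD₂cont.mono hKU)
  obtain ⟨M₃, hM₃⟩ := hKKcompact.exists_bound_of_continuousOn (hD₁₂cont.mono hKU)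
  set M : ℝ := max 0 (max M₁ (max M₂ M₃)) with hMdef
  have hM0 : 0 ≤ M := le_max_left _ _
  have hMb : ∀ p ∈ K ×ˢ K, |D₁ p| ≤ M ∧ |D₂ p| ≤ M ∧ |D₁₂ p| ≤ M := by
    intro p hp
    refine ⟨le_trans (hM₁ p hp) ?_, le_trans (hM₂ p hp) ?_, le_trans (hM₃ p hp) ?_⟩
    · exact le_trans (le_max_left _ _) (le_max_right _ _)
    · exact le_trans (le_trans (le_max_left _ _) (le_max_right _ _)) (le_max_right _ _)
    · exact le_trans (le_trans (le_max_right _ _) (le_max_right _ _)) (le_max_right _ _)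
  -- a.e. membership facts
  have haeK : ∀ᵐ s ∂(volume.restrict K), s ∈ K := ae_restrict_mem hKmeas
  have haeKK : ∀ᵐ q ∂((volume.restrict K).prod (volume.restrict K)), q ∈ K ×ˢ K := by
    filter_upwards [ae_prod_fst_mem (volume.restrict K) (volume.restrict K) haeK,
      ae_prod_snd_mem (volume.restrict K) (volume.restrict K) haeK] with q h1 h2
    exact Set.mk_mem_prod h1 h2
  -- probabilities are at most 1
  have hP1 : ∀ (S : Set α), (ℙ S).toReal ≤ 1 := by
    intro S
    have := prob_le_one (μ := ℙ) (s := S)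
    simpa using ENNReal.toReal_mono (by simp) this
  -- the main identity and integrability facts, for a general random vector X
  have main : ∀ (X : α → ℝ × ℝ), Measurable X → (∀ ω, X ω ∈ K ×ˢ K) →
      (∫ ω, φ (X ω).1 (X ω).2 ∂ℙ
        = φ 1 1
          - (∫ s, D₁ (s, 1) * (ℙ {ω | (X ω).1 ≤ s ∧ (X ω).2 ≤ 1}).toReal ∂(volume.restrict K))
          - (∫ t, D₂ (1, t) * (ℙ {ω | (X ω).1 ≤ 1 ∧ (X ω).2 ≤ t}).toReal ∂(volume.restrict K))
          + ∫ q, D₁₂ (q.2, q.1) * (ℙ {ω | (X ω).1 ≤ q.2 ∧ (X ω).2 ≤ q.1}).toReal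
              ∂((volume.restrict K).prod (volume.restrict K)))
      ∧ Integrable (fun s => D₁ (s, 1) * (ℙ {ω | (X ω).1 ≤ s ∧ (X ω).2 ≤ 1}).toReal)
          (volume.restrict K)
      ∧ Integrable (fun t => D₂ (1, t) * (ℙ {ω | (X ω).1 ≤ 1 ∧ (X ω).2 ≤ t}).toReal)
          (volume.restrict K)
      ∧ Integrable (fun q => D₁₂ (q.2, q.1) * (ℙ {ω | (X ω).1 ≤ q.2 ∧ (X ω).2 ≤ q.1}).toReal)
          ((volume.restrict K).prod (volume.restrict K)) := by
    intro X hX hXr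
    -- product-space integrands
    set f₁ : α × ℝ → ℝ := fun p => if (X p.1).1 ≤ p.2 then D₁ (p.2, 1) else 0 with hf₁def
    set f₂ : α × ℝ → ℝ := fun p => if (X p.1).2 ≤ p.2 then D₂ (1, p.2) else 0 with hf₂def
    set f₃ : α × (ℝ × ℝ) → ℝ := fun p =>
      if (X p.1).1 ≤ p.2.2 ∧ (X p.1).2 ≤ p.2.1 then D₁₂ (p.2.2, p.2.1) else 0 with hf₃def
    have mf₁ : Measurable f₁ := by
      rw [hf₁def]
      exact Measurable.ite (measurableSet_le (hX.comp measurable_fst).fst measurable_snd)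
        (mD₁.comp (measurable_snd.prodMk measurable_const)) measurable_const
    have mf₂ : Measurable f₂ := by
      rw [hf₂def]
      exact Measurable.ite (measurableSet_le (hX.comp measurable_fst).snd measurable_snd)
        (mD₂.comp (measurable_const.prodMk measurable_snd)) measurable_const
    have mf₃ : Measurable f₃ := by
      rw [hf₃def]
      refine Measurable.ite ?_ (mD₁₂.comp (measurable_snd.snd.prodMk measurable_snd.fst))
        measurable_const
      exact (measurableSet_le (hX.comp measurable_fst).fst measurable_snd.snd).inter
        (measurableSet_le (hX.comp measurable_fst).snd measurable_snd.fst)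
    -- integrability on product spaces
    have hb₁ : ∀ᵐ p ∂(ℙ.prod (volume.restrict K)), |f₁ p| ≤ M := by
      filter_upwards [ae_prod_snd_mem ℙ (volume.restrict K) haeK] with p hp
      rw [hf₁def]
      dsimp only
      split_ifs with h
      · exact (hMb (p.2, 1) (Set.mk_mem_prod hp h1K)).1
      · simpa using hM0
    have hb₂ : ∀ᵐ p ∂(ℙ.prod (volume.restrict K)), |f₂ p| ≤ M := by
      filter_upwards [ae_prod_snd_mem ℙ (volume.restrict K) haeK] with p hp
      rw [hf₂def]
      dsimp only
      split_ifs with h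
      · exact (hMb (1, p.2) (Set.mk_mem_prod h1K hp)).2.1
      · simpa using hM0
    have hb₃ : ∀ᵐ p ∂(ℙ.prod ((volume.restrict K).prod (volume.restrict K))), |f₃ p| ≤ M := by
      filter_upwards [ae_prod_snd_mem ℙ _ haeKK] with p hp
      rw [hf₃def]
      dsimp only
      split_ifs with h
      · exact (hMb (p.2.2, p.2.1) (Set.mk_mem_prod hp.2 hp.1)).2.2
      · simpa using hM0
    have hif₁ : Integrable f₁ (ℙ.prod (volume.restrict K)) :=
      bounded_integrable mf₁.aestronglyMeasurable hb₁
    have hif₂ : Integrable f₂ (ℙ.prod (volume.restrict K)) :=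
      bounded_integrable mf₂.aestronglyMeasurable hb₂
    have hif₃ : Integrable f₃ (ℙ.prod ((volume.restrict K).prod (volume.restrict K))) :=
      bounded_integrable mf₃.aestronglyMeasurable hb₃
    -- pointwise representation
    have hrep : ∀ ω, φ (X ω).1 (X ω).2
        = φ 1 1 - (∫ s, f₁ (ω, s) ∂(volume.restrict K))
          - (∫ t, f₂ (ω, t) ∂(volume.restrict K))
          + ∫ q, f₃ (ω, q) ∂((volume.restrict K).prod (volume.restrict K)) := by
      intro ω
      have hxω : (X ω).1 ∈ K := (hXr ω).1
      have hyω : (X ω).2 ∈ K := (hXr ω).2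
      have e1 : (∫ s in (X ω).1..1, D₁ (s, 1)) = ∫ s, f₁ (ω, s) ∂(volume.restrict K) :=
        conv _ _ hxω
      have e2 : (∫ t in (X ω).2..1, D₂ (1, t)) = ∫ t, f₂ (ω, t) ∂(volume.restrict K) :=
        conv _ _ hyω
      have e3 : (∫ t in (X ω).2..1, ∫ s in (X ω).1..1, D₁₂ (s, t))
          = ∫ q, f₃ (ω, q) ∂((volume.restrict K).prod (volume.restrict K)) := by
        have einner : (fun t => ∫ s in (X ω).1..1, D₁₂ (s, t))
            = fun t => ∫ s, (if (X ω).1 ≤ s then D₁₂ (s, t) else 0) ∂(volume.restrict K) :=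
          funext fun t => conv _ _ hxω
        rw [einner, conv _ _ hyω]
        have eouter : (fun t => if (X ω).2 ≤ t then
              (∫ s, (if (X ω).1 ≤ s then D₁₂ (s, t) else 0) ∂(volume.restrict K)) else 0)
            = fun t => ∫ s, f₃ (ω, (t, s)) ∂(volume.restrict K) := by
          funext t
          rw [hf₃def]
          by_cases hyt : (X ω).2 ≤ t
          · simp only [hyt, if_true, and_true]
          · simp [hyt]
        rw [eouter]
        have hintf : Integrable (Function.uncurry fun t s => f₃ (ω, (t, s)))
            ((volume.restrict K).prod (volume.restrict K)) := by
          refine bounded_integrable ?_ (M := M) ?_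
          · exact (mf₃.comp (measurable_const.prodMk measurable_id)).aestronglyMeasurable
          · filter_upwards [haeKK] with q hq
            rw [hf₃def]
            dsimp only [Function.uncurry]
            split_ifs with h
            · exact (hMb (q.2, q.1) (Set.mk_mem_prod hq.2 hq.1)).2.2
            · simpa using hM0
        exact integral_integral hintf
      have := rep (X ω).1 (X ω).2 hxω hyω
      rw [this, e1, e2, e3]
    -- inner integrals over ℙ
    have hinner₁ : ∀ s : ℝ, (∫ ω, f₁ (ω, s) ∂ℙ)
        = D₁ (s, 1) * (ℙ {ω | (X ω).1 ≤ s ∧ (X ω).2 ≤ 1}).toReal := by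
      intro s
      have hms : MeasurableSet {ω | (X ω).1 ≤ s} := measurableSet_le hX.fst measurable_const
      have e : (fun ω => f₁ (ω, s)) = Set.indicator {ω | (X ω).1 ≤ s} (fun _ => D₁ (s, 1)) := by
        funext ω
        rw [hf₁def]
        simp [Set.indicator_apply]
      rw [e, integral_indicator_const _ hms]
      have hset : {ω | (X ω).1 ≤ s} = {ω | (X ω).1 ≤ s ∧ (X ω).2 ≤ 1} := by
        ext ω
        exact (and_iff_left (hXr ω).2.2).symm
      rw [hset, smul_eq_mul, mul_comm, measureReal_def]
    have hinner₂ : ∀ t : ℝ, (∫ ω, f₂ (ω, t) ∂ℙ)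
        = D₂ (1, t) * (ℙ {ω | (X ω).1 ≤ 1 ∧ (X ω).2 ≤ t}).toReal := by
      intro t
      have hms : MeasurableSet {ω | (X ω).2 ≤ t} := measurableSet_le hX.snd measurable_const
      have e : (fun ω => f₂ (ω, t)) = Set.indicator {ω | (X ω).2 ≤ t} (fun _ => D₂ (1, t)) := by
        funext ω
        rw [hf₂def]
        simp [Set.indicator_apply]
      rw [e, integral_indicator_const _ hms]
      have hset : {ω | (X ω).2 ≤ t} = {ω | (X ω).1 ≤ 1 ∧ (X ω).2 ≤ t} := by
        ext ω
        exact (and_iff_right (hXr ω).1.2).symm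
      rw [hset, smul_eq_mul, mul_comm, measureReal_def]
    have hinner₃ : ∀ q : ℝ × ℝ, (∫ ω, f₃ (ω, q) ∂ℙ)
        = D₁₂ (q.2, q.1) * (ℙ {ω | (X ω).1 ≤ q.2 ∧ (X ω).2 ≤ q.1}).toReal := by
      intro q
      have hms : MeasurableSet {ω | (X ω).1 ≤ q.2 ∧ (X ω).2 ≤ q.1} :=
        (measurableSet_le hX.fst measurable_const).inter
          (measurableSet_le hX.snd measurable_const)
      have e : (fun ω => f₃ (ω, q))
          = Set.indicator {ω | (X ω).1 ≤ q.2 ∧ (X ω).2 ≤ q.1} (fun _ => D₁₂ (q.2, q.1)) := by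
        funext ω
        rw [hf₃def]
        simp [Set.indicator_apply]
      rw [e, integral_indicator_const _ hms, smul_eq_mul, mul_comm, measureReal_def]
    -- swap integrals
    have hswap₁ : (∫ ω, ∫ s, f₁ (ω, s) ∂(volume.restrict K) ∂ℙ)
        = ∫ s, ∫ ω, f₁ (ω, s) ∂ℙ ∂(volume.restrict K) :=
      integral_integral_swap hif₁
    have hswap₂ : (∫ ω, ∫ t, f₂ (ω, t) ∂(volume.restrict K) ∂ℙ)
        = ∫ t, ∫ ω, f₂ (ω, t) ∂ℙ ∂(volume.restrict K) :=
      integral_integral_swap hif₂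
    have hswap₃ : (∫ ω, ∫ q, f₃ (ω, q) ∂((volume.restrict K).prod (volume.restrict K)) ∂ℙ)
        = ∫ q, ∫ ω, f₃ (ω, q) ∂ℙ ∂((volume.restrict K).prod (volume.restrict K)) :=
      integral_integral_swap hif₃
    -- integrability of the partial integrals
    have hIA : Integrable (fun ω => ∫ s, f₁ (ω, s) ∂(volume.restrict K)) ℙ :=
      hif₁.integral_prod_left
    have hIB : Integrable (fun ω => ∫ t, f₂ (ω, t) ∂(volume.restrict K)) ℙ :=
      hif₂.integral_prod_left
    have hIC : Integrable (fun ω =>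
        ∫ q, f₃ (ω, q) ∂((volume.restrict K).prod (volume.restrict K))) ℙ :=
      hif₃.integral_prod_left
    constructor
    · -- the identity
      calc ∫ ω, φ (X ω).1 (X ω).2 ∂ℙ
          = ∫ ω, (φ 1 1 - (∫ s, f₁ (ω, s) ∂(volume.restrict K))
              - (∫ t, f₂ (ω, t) ∂(volume.restrict K))
              + ∫ q, f₃ (ω, q) ∂((volume.restrict K).prod (volume.restrict K))) ∂ℙ := by
            exact integral_congr_ae (Filter.Eventually.of_forall hrep)
        _ = φ 1 1 - (∫ ω, ∫ s, f₁ (ω, s) ∂(volume.restrict K) ∂ℙ)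
              - (∫ ω, ∫ t, f₂ (ω, t) ∂(volume.restrict K) ∂ℙ)
              + ∫ ω, ∫ q, f₃ (ω, q) ∂((volume.restrict K).prod (volume.restrict K)) ∂ℙ := by
            have e1 := integral_add (μ := ℙ)
              (f := fun ω => (φ 1 1 - ∫ s, f₁ (ω, s) ∂(volume.restrict K))
                - ∫ t, f₂ (ω, t) ∂(volume.restrict K))
              (g := fun ω => ∫ q, f₃ (ω, q) ∂((volume.restrict K).prod (volume.restrict K)))
              (((integrable_const _).sub hIA).sub hIB) hIC
            have e2 := integral_sub (μ := ℙ)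
              (f := fun ω => φ 1 1 - ∫ s, f₁ (ω, s) ∂(volume.restrict K))
              (g := fun ω => ∫ t, f₂ (ω, t) ∂(volume.restrict K))
              ((integrable_const _).sub hIA) hIB
            have e3 := integral_sub (μ := ℙ)
              (f := fun _ => φ 1 1)
              (g := fun ω => ∫ s, f₁ (ω, s) ∂(volume.restrict K))
              (integrable_const _) hIA
            rw [e1, e2, e3, integral_const]
            simp
        _ = _ := by
            rw [hswap₁, hswap₂, hswap₃]
            simp only [hinner₁, hinner₂, hinner₃]
    · refine ⟨?_, ?_, ?_⟩
      · exact (hif₁.integral_prod_right).congr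
          (Filter.Eventually.of_forall fun s => hinner₁ s)
      · exact (hif₂.integral_prod_right).congr
          (Filter.Eventually.of_forall fun t => hinner₂ t)
      · exact (hif₃.integral_prod_right).congr
          (Filter.Eventually.of_forall fun q => hinner₃ q)
  obtain ⟨idV, hIV₁, hIV₂, hIV₃⟩ := main V hV hVr
  obtain ⟨idW, hIW₁, hIW₂, hIW₃⟩ := main W hW hWr
  rw [idV, idW]
  -- termwise comparison
  have cmp₁ : (∫ s, D₁ (s, 1) * (ℙ {ω | (V ω).1 ≤ s ∧ (V ω).2 ≤ 1}).toReal ∂(volume.restrict K))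
      ≤ ∫ s, D₁ (s, 1) * (ℙ {ω | (W ω).1 ≤ s ∧ (W ω).2 ≤ 1}).toReal ∂(volume.restrict K) := by
    refine setIntegral_mono_on hIV₁ hIW₁ hKmeas ?_
    intro s hs
    have hd : F₁ s 1 ≤ F₂ s 1 := by
      rw [hKdef] at hs
      exact hdom s hs 1 (right_mem_Icc.2 zero_le_one)
    rw [hF₁, hF₂] at hd
    exact mul_le_mul_of_nonneg_left hd (hD₁nn (s, 1) (hsq s 1 hs h1K))
  have cmp₂ : (∫ t, D₂ (1, t) * (ℙ {ω | (V ω).1 ≤ 1 ∧ (V ω).2 ≤ t}).toReal ∂(volume.restrict K))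
      ≤ ∫ t, D₂ (1, t) * (ℙ {ω | (W ω).1 ≤ 1 ∧ (W ω).2 ≤ t}).toReal ∂(volume.restrict K) := by
    refine setIntegral_mono_on hIV₂ hIW₂ hKmeas ?_
    intro t ht
    have hd : F₁ 1 t ≤ F₂ 1 t := by
      rw [hKdef] at ht
      exact hdom 1 (right_mem_Icc.2 zero_le_one) t ht
    rw [hF₁, hF₂] at hd
    exact mul_le_mul_of_nonneg_left hd (hD₂nn (1, t) (hsq 1 t h1K ht))
  have cmp₃ : (∫ q, D₁₂ (q.2, q.1) * (ℙ {ω | (W ω).1 ≤ q.2 ∧ (W ω).2 ≤ q.1}).toReal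
        ∂((volume.restrict K).prod (volume.restrict K)))
      ≤ ∫ q, D₁₂ (q.2, q.1) * (ℙ {ω | (V ω).1 ≤ q.2 ∧ (V ω).2 ≤ q.1}).toReal
        ∂((volume.restrict K).prod (volume.restrict K)) := by
    rw [Measure.prod_restrict] at hIV₃ hIW₃ ⊢
    refine setIntegral_mono_on hIW₃ hIV₃ (hKmeas.prod hKmeas) ?_
    intro q hq
    have hd : F₁ q.2 q.1 ≤ F₂ q.2 q.1 := by
      have h1 : q.1 ∈ Icc (0:ℝ) 1 := by rw [hKdef] at hq; exact hq.1
      have h2 : q.2 ∈ Icc (0:ℝ) 1 := by rw [hKdef] at hq; exact hq.2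
      exact hdom q.2 h2 q.1 h1
    rw [hF₁, hF₂] at hd
    exact mul_le_mul_of_nonpos_left hd (hsubD (q.2, q.1) (hsq q.2 q.1 hq.2 hq.1))
  linarith
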